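/- A split graph G is unbalanced if and only if it has a swing vertex, i.e., there exists a KS-partition of G together with either a vertex s ∈ S such that K ∪ {s} is a clique, or a vertex k ∈ K such that S ∪ {k} is a stable set. -/

import Mathlib

open SimpleGraph
attribute [local instance] Classical.propDecidable

variable {V : Type*} [Fintype V] [DecidableEq V]

/-- A set of vertices is stable (independent) if no two of its elements are adjacent. -/
def IsStableSet (G : SimpleGraph V) (s : Set V) : Prop :=
  s.Pairwise fun a b => ¬ G.Adj a b

/-- The clique number ω(G). -/
noncomputable def omegaNum (G : SimpleGraph V) : ℕ :=
  Finset.univ.sup fun s : Finset V => if G.IsClique (s : Set V) then s.card else 0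

/-- The independence number α(G). -/
noncomputable def alphaNum (G : SimpleGraph V) : ℕ :=
  Finset.univ.sup fun s : Finset V => if IsStableSet G (s : Set V) then s.card else 0

/-- A KS-partition of `G`: a partition of the vertex set into a clique `K` and a stable set `S`. -/
def IsKSPartition (G : SimpleGraph V) (K S : Finset V) : Prop :=
  Disjoint K S ∧ K ∪ S = Finset.univ ∧ G.IsClique (K : Set V) ∧ IsStableSet G (S : Set V)

/-- `G` is a split graph. -/
def IsSplit (G : SimpleGraph V) : Prop := ∃ K S : Finset V, IsKSPartition G K S

/-- A split graph is balanced if it has a KS-partition with `|K| = ω(G)` and `|S| = α(G)`. -/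
def IsBalanced (G : SimpleGraph V) : Prop :=
  ∃ K S : Finset V, IsKSPartition G K S ∧ K.card = omegaNum G ∧ S.card = alphaNum G

lemma stable_subset {G : SimpleGraph V} {s t : Set V} (h : IsStableSet G s) (hts : t ⊆ s) :
    IsStableSet G t := h.mono hts

lemma card_le_omega (G : SimpleGraph V) {s : Finset V} (h : G.IsClique (s : Set V)) :
    s.card ≤ omegaNum G := by
  have := Finset.le_sup (f := fun s : Finset V => if G.IsClique (s : Set V) then s.card else 0)
    (Finset.mem_univ s)
  simpa [omegaNum, if_pos h] using this

lemma card_le_alpha (G : SimpleGraph V) {s : Finset V} (h : IsStableSet G (s : Set V)) :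
    s.card ≤ alphaNum G := by
  have := Finset.le_sup (f := fun s : Finset V => if IsStableSet G (s : Set V) then s.card else 0)
    (Finset.mem_univ s)
  simpa [alphaNum, if_pos h] using this

lemma exists_max_clique (G : SimpleGraph V) :
    ∃ s : Finset V, G.IsClique (s : Set V) ∧ s.card = omegaNum G := by
  obtain ⟨s, -, hs⟩ := Finset.exists_mem_eq_sup (Finset.univ : Finset (Finset V))
    ⟨∅, Finset.mem_univ ∅⟩ (fun s : Finset V => if G.IsClique (s : Set V) then s.card else 0)
  by_cases h : G.IsClique (s : Set V)
  · exact ⟨s, h, by rw [omegaNum, hs, if_pos h]⟩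
  · refine ⟨∅, by simp, ?_⟩
    rw [omegaNum, hs, if_neg h]; simp

lemma exists_max_stable (G : SimpleGraph V) :
    ∃ s : Finset V, IsStableSet G (s : Set V) ∧ s.card = alphaNum G := by
  obtain ⟨s, -, hs⟩ := Finset.exists_mem_eq_sup (Finset.univ : Finset (Finset V))
    ⟨∅, Finset.mem_univ ∅⟩ (fun s : Finset V => if IsStableSet G (s : Set V) then s.card else 0)
  by_cases h : IsStableSet G (s : Set V)
  · exact ⟨s, h, by rw [alphaNum, hs, if_pos h]⟩
  · refine ⟨∅, by simp [IsStableSet], ?_⟩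
    rw [alphaNum, hs, if_neg h]; simp

lemma inter_card_le_one {G : SimpleGraph V} {C S : Finset V}
    (hC : G.IsClique (C : Set V)) (hS : IsStableSet G (S : Set V)) : (C ∩ S).card ≤ 1 := by
  refine Finset.card_le_one.mpr fun a ha b hb => ?_
  by_contra hne
  exact hS (Finset.mem_inter.mp ha).2 (Finset.mem_inter.mp hb).2 hne
    (hC (Finset.mem_inter.mp ha).1 (Finset.mem_inter.mp hb).1 hne)

theorem unbalanced_iff_swing' (G : SimpleGraph V) (hG : IsSplit G) :
    ¬ IsBalanced G ↔
      ∃ K S : Finset V, IsKSPartition G K S ∧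
        ((∃ s ∈ S, G.IsClique ((insert s K : Finset V) : Set V)) ∨
         (∃ k ∈ K, IsStableSet G ((insert k S : Finset V) : Set V))) := by
  constructor
  · intro hnb
    obtain ⟨K, S, hKS⟩ := hG
    obtain ⟨hdisj, huniv, hKcl, hSst⟩ := hKS
    have hKω : K.card ≤ omegaNum G := card_le_omega G hKcl
    have hSα : S.card ≤ alphaNum G := card_le_alpha G hSst
    have hsub : ∀ C : Finset V, C ⊆ (C ∩ K) ∪ (C ∩ S) := by
      intro C x hx
      have hx' : x ∈ K ∪ S := huniv ▸ Finset.mem_univ x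
      rcases Finset.mem_union.mp hx' with h | h
      · exact Finset.mem_union_left _ (Finset.mem_inter.mpr ⟨hx, h⟩)
      · exact Finset.mem_union_right _ (Finset.mem_inter.mpr ⟨hx, h⟩)
    by_cases hK : K.card = omegaNum G
    · by_cases hS : S.card = alphaNum G
      · exact absurd ⟨K, S, ⟨hdisj, huniv, hKcl, hSst⟩, hK, hS⟩ hnb
      · -- S.card < alphaNum G : find k ∈ K with insert k S stable
        have hSlt : S.card < alphaNum G := lt_of_le_of_ne hSα hS
        obtain ⟨A, hAst, hAcard⟩ := exists_max_stable G
        have h1 : (A ∩ K).card ≤ 1 := by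
          have := inter_card_le_one hKcl hAst
          rwa [Finset.inter_comm] at this
        have hcard : A.card ≤ (A ∩ K).card + (A ∩ S).card := by
          calc A.card ≤ ((A ∩ K) ∪ (A ∩ S)).card := Finset.card_le_card (by
                intro x hx
                have hx' : x ∈ K ∪ S := huniv ▸ Finset.mem_univ x
                rcases Finset.mem_union.mp hx' with h | h
                · exact Finset.mem_union_left _ (Finset.mem_inter.mpr ⟨hx, h⟩)
                · exact Finset.mem_union_right _ (Finset.mem_inter.mpr ⟨hx, h⟩))
            _ ≤ _ := Finset.card_union_le _ _
        have hAS : S.card ≤ (A ∩ S).card := by omega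
        have hASeq : A ∩ S = S :=
          Finset.eq_of_subset_of_card_le Finset.inter_subset_right hAS
        have hASle : (A ∩ S).card ≤ S.card := Finset.card_le_card Finset.inter_subset_right
        have hAKne : (A ∩ K).Nonempty := by
          rw [← Finset.card_pos]; omega
        obtain ⟨k, hk⟩ := hAKne
        refine ⟨K, S, ⟨hdisj, huniv, hKcl, hSst⟩, Or.inr ⟨k, (Finset.mem_inter.mp hk).2, ?_⟩⟩
        refine stable_subset hAst ?_
        rw [Finset.coe_insert]
        refine Set.insert_subset (Finset.mem_coe.mpr (Finset.mem_inter.mp hk).1) ?_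
        exact_mod_cast hASeq ▸ (Finset.inter_subset_left (s₂ := S))
    · -- K.card < omegaNum G : find s ∈ S with insert s K clique
      have hKlt : K.card < omegaNum G := lt_of_le_of_ne hKω hK
      obtain ⟨C, hCcl, hCcard⟩ := exists_max_clique G
      have h1 : (C ∩ S).card ≤ 1 := inter_card_le_one hCcl hSst
      have hcard : C.card ≤ (C ∩ K).card + (C ∩ S).card :=
        (Finset.card_le_card (hsub C)).trans (Finset.card_union_le _ _)
      have hCK : K.card ≤ (C ∩ K).card := by omega
      have hCKeq : C ∩ K = K := Finset.eq_of_subset_of_card_le Finset.inter_subset_right hCK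
      have hCKle : (C ∩ K).card ≤ K.card := Finset.card_le_card Finset.inter_subset_right
      have hCSne : (C ∩ S).Nonempty := by
        rw [← Finset.card_pos]; omega
      obtain ⟨s, hs⟩ := hCSne
      refine ⟨K, S, ⟨hdisj, huniv, hKcl, hSst⟩, Or.inl ⟨s, (Finset.mem_inter.mp hs).2, ?_⟩⟩
      refine hCcl.subset ?_
      rw [Finset.coe_insert]
      refine Set.insert_subset (Finset.mem_coe.mpr (Finset.mem_inter.mp hs).1) ?_
      exact_mod_cast hCKeq ▸ (Finset.inter_subset_left (s₂ := K))
  · rintro ⟨K, S, ⟨hdisj, huniv, hKcl, hSst⟩, hswing⟩ ⟨K', S', ⟨hd', hu', hK'cl, hS'st⟩, hKω, hSα⟩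
    have n1 : K.card + S.card = Fintype.card V := by
      rw [← Finset.card_union_of_disjoint hdisj, huniv, Finset.card_univ]
    have n2 : K'.card + S'.card = Fintype.card V := by
      rw [← Finset.card_union_of_disjoint hd', hu', Finset.card_univ]
    rcases hswing with ⟨s, hsS, hcl⟩ | ⟨k, hkK, hst⟩
    · have hsK : s ∉ K := Finset.disjoint_right.mp hdisj hsS
      have hle : K.card + 1 ≤ omegaNum G := by
        have := card_le_omega G hcl
        rwa [Finset.card_insert_of_notMem hsK] at this
      have hle2 : S.card ≤ alphaNum G := card_le_alpha G hSst
      omega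
    · have hkS : k ∉ S := Finset.disjoint_left.mp hdisj hkK
      have hle : S.card + 1 ≤ alphaNum G := by
        have := card_le_alpha G hst
        rwa [Finset.card_insert_of_notMem hkS] at this
      have hle2 : K.card ≤ omegaNum G := card_le_omega G hKcl
      omega

/-- A split graph is unbalanced iff it has a KS-partition with a swing vertex:
either s ∈ S with K ∪ {s} a clique, or k ∈ K with S ∪ {k} stable. -/
theorem unbalanced_iff_swing (G : SimpleGraph V) (hG : IsSplit G) :
    ¬ IsBalanced G ↔
      ∃ K S : Finset V, IsKSPartition G K S ∧
        ((∃ s ∈ S, G.IsClique ((insert s K : Finset V) : Set V)) ∨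
         (∃ k ∈ K, IsStableSet G ((insert k S : Finset V) : Set V))) := by
  exact unbalanced_iff_swing' G hG
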